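/- Let D be a digraph on k vertices such that the real nullspace of its skew adjacency matrix A_D equals the span of the all-ones vector. Then there exists a constant α > 0 such that for every probability vector p indexed by V(D), max_{v ∈ V(D)} ( Σ_{u ∈ N^+(v)} p_u − Σ_{u ∈ N^-(v)} p_u ) ≥ α · max_{v ∈ V(D)} |p_v − 1/k|. -/

import Mathlib

open Finset

/-- A digraph: finite vertex set, no loops, at most one arc per pair. -/
structure Digraph' (V : Type) where
  Adj : V → V → Bool
  irrefl : ∀ v, Adj v v = false
  asymm : ∀ u v, Adj u v = true → Adj v u = false

namespace Digraph'

variable {V : Type} [Fintype V] [DecidableEq V] (D : Digraph' V)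

/-- Out-neighborhood N⁺(v). -/
def outN (v : V) : Finset V := univ.filter fun u => D.Adj v u
/-- In-neighborhood N⁻(v). -/
def inN (v : V) : Finset V := univ.filter fun u => D.Adj u v

/-- max over vertices v of Σ_{u∈N⁺(v)} p u − Σ_{u∈N⁻(v)} p u. -/
noncomputable def payoff (p : V → ℝ) : ℝ :=
  sSup (Set.range fun v => (∑ u ∈ D.outN v, p u) - ∑ u ∈ D.inN v, p u)

/-- Auxiliary (fuel-indexed) definition of the value of the semi-restricted D-game. -/
noncomputable def valueAux : ℕ → (V → ℕ) → ℝ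
  | 0, _ => 0
  | (n+1), r =>
    if ∀ u, r u = 0 then 0
    else sInf { x : ℝ | ∃ p : V → ℝ, (∀ u, 0 ≤ p u) ∧ (∑ u, p u = 1) ∧
      (∀ u, p u ≠ 0 → r u ≠ 0) ∧
      x = D.payoff p + ∑ u, p u * valueAux n (fun w => r w - if w = u then 1 else 0) }

/-- The value S_D(r) of the semi-restricted D-game with restriction vector r. -/
noncomputable def value (r : V → ℕ) : ℝ := D.valueAux (∑ u, r u) r

end Digraph'

/-- A strategy for Rei in the semi-restricted D-game. -/
structure ReiStrategy {V : Type} [Fintype V] [DecidableEq V] (D : Digraph' V) where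
  play : (V → ℕ) → V → ℝ
  nonneg : ∀ r : V → ℕ, (¬ ∀ u, r u = 0) → ∀ u, 0 ≤ play r u
  sum_one : ∀ r : V → ℕ, (¬ ∀ u, r u = 0) → ∑ u, play r u = 1
  supp : ∀ r : V → ℕ, (¬ ∀ u, r u = 0) → ∀ u, play r u ≠ 0 → r u ≠ 0

namespace Digraph'

variable {V : Type} [Fintype V] [DecidableEq V] (D : Digraph' V)

/-- Auxiliary (fuel-indexed) value of Rei's strategy R. -/
noncomputable def stratValueAux (R : ReiStrategy D) : ℕ → (V → ℕ) → ℝ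
  | 0, _ => 0
  | (n+1), r =>
    if ∀ u, r u = 0 then 0
    else D.payoff (R.play r) +
      ∑ u, R.play r u * stratValueAux R n (fun w => r w - if w = u then 1 else 0)

/-- The value S_D(r; R) of Rei's strategy R at restriction vector r. -/
noncomputable def stratValue (R : ReiStrategy D) (r : V → ℕ) : ℝ :=
  D.stratValueAux R (∑ u, r u) r

/-- A strategy for Rei is optimal if its value equals the game value at every restriction vector. -/
def IsOptimal (R : ReiStrategy D) : Prop := ∀ r : V → ℕ, D.stratValue R r = D.value r

/-- A strategy is oblivious if it only depends on the support of the restriction vector. -/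
def IsOblivious (R : ReiStrategy D) : Prop :=
  ∀ r r' : V → ℕ, (∀ u, r u ≠ 0 ↔ r' u ≠ 0) → R.play r = R.play r'

/-- A digraph is oblivious if Rei has an oblivious optimal strategy. -/
def Oblivious : Prop := ∃ R : ReiStrategy D, D.IsOptimal R ∧ D.IsOblivious R

/-- A tournament: exactly one arc between any two distinct vertices. -/
def IsTournament : Prop := ∀ u v : V, u ≠ v → (D.Adj u v = true ∨ D.Adj v u = true)

/-- Eulerian: every vertex has equal in- and out-degree. -/
def IsEulerian : Prop := ∀ v : V, (D.outN v).card = (D.inN v).card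

/-- The skew adjacency matrix of a digraph. -/
def skewAdj : Matrix V V ℝ := fun u v =>
  if D.Adj u v then 1 else if D.Adj v u then -1 else 0

end Digraph'

theorem payoff_lower_bound_of_trivial_nullspace {V : Type} [Fintype V] [DecidableEq V]
    [Nonempty V] (D : Digraph' V)
    (hnull : ∀ x : V → ℝ, D.skewAdj.mulVec x = 0 ↔ ∃ c : ℝ, x = fun _ => c) :
    ∃ α : ℝ, 0 < α ∧ ∀ p : V → ℝ, (∀ u, 0 ≤ p u) → (∑ u, p u = 1) →
      α * sSup (Set.range fun v => |p v - 1 / (Fintype.card V : ℝ)|) ≤ D.payoff p := by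
  classical
  set A := D.skewAdj with hA
  set k : ℕ := Fintype.card V with hkdef
  have hk0 : (0:ℝ) < k := by
    exact_mod_cast Fintype.card_pos
  -- row formula
  have hrow : ∀ (p : V → ℝ) (v : V),
      (∑ u ∈ D.outN v, p u) - ∑ u ∈ D.inN v, p u = A.mulVec p v := by
    intro p v
    have : A.mulVec p v = ∑ u, (if D.Adj v u then p u else 0)
        - ∑ u, (if D.Adj u v then p u else 0) := by
      rw [Matrix.mulVec, dotProduct, ← Finset.sum_sub_distrib]
      refine Finset.sum_congr rfl fun u _ => ?_
      simp only [hA, Digraph'.skewAdj]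
      by_cases h1 : D.Adj v u
      · have h2 : D.Adj u v = false := D.asymm v u h1
        simp [h1, h2]
      · by_cases h2 : D.Adj u v <;> simp [h1, h2]
    rw [this, Digraph'.outN, Digraph'.inN, Finset.sum_filter, Finset.sum_filter]
  have hconst : ∀ c : ℝ, A.mulVec (fun _ => c) = 0 := fun c => (hnull _).mpr ⟨c, rfl⟩
  -- skew-symmetry
  have hskew : ∀ u v, A u v = - A v u := by
    intro u v
    simp only [hA, Digraph'.skewAdj]
    by_cases h1 : D.Adj u v
    · have h2 : D.Adj v u = false := D.asymm u v h1
      simp [h1, h2]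
    · by_cases h2 : D.Adj v u <;> simp [h1, h2]
  -- total of A.mulVec p is 0
  have hsum0 : ∀ p : V → ℝ, ∑ v, A.mulVec p v = 0 := by
    intro p
    have hcol : ∀ u, ∑ v, A v u = 0 := by
      intro u
      have := congrFun (hconst 1) u
      simp only [Matrix.mulVec, dotProduct, mul_one, Pi.zero_apply] at this
      calc ∑ v, A v u = ∑ v, -(A u v) := by
            refine Finset.sum_congr rfl fun v _ => hskew v u
        _ = -∑ v, A u v := by rw [Finset.sum_neg_distrib]
        _ = 0 := by rw [this, neg_zero]
    calc ∑ v, A.mulVec p v = ∑ v, ∑ u, A v u * p u := rfl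
      _ = ∑ u, (∑ v, A v u) * p u := by
          rw [Finset.sum_comm]
          exact Finset.sum_congr rfl fun u _ => (Finset.sum_mul _ _ _).symm
      _ = 0 := by simp [hcol]
  -- antilipschitz constant
  let s : (V → ℝ) →ₗ[ℝ] ℝ :=
    { toFun := fun x => ∑ u, x u
      map_add' := fun x y => by simp [Finset.sum_add_distrib]
      map_smul' := fun c x => by simp [Finset.mul_sum] }
  set U := LinearMap.ker s with hU
  let L : U →ₗ[ℝ] (V → ℝ) := A.mulVecLin.comp U.subtype
  have hLker : LinearMap.ker L = ⊥ := by
    rw [LinearMap.ker_eq_bot']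
    intro q hq
    have h0 : A.mulVec (q : V → ℝ) = 0 := hq
    obtain ⟨c, hc⟩ := (hnull _).mp h0
    have hsq : ∑ u, (q : V → ℝ) u = 0 := q.2
    rw [hc] at hsq
    simp only [Finset.sum_const, Finset.card_univ, nsmul_eq_mul] at hsq
    have hc0 : c = 0 := by
      rcases mul_eq_zero.mp hsq with h | h
      · exact absurd h (by positivity)
      · exact h
    ext u
    rw [hc]; simp [hc0]
  obtain ⟨K, hK0, hKanti⟩ := L.exists_antilipschitzWith hLker
  -- the constant α
  refine ⟨1 / ((K : ℝ) * k), by positivity, ?_⟩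
  intro p hp hp1
  set y := A.mulVec p with hy
  -- payoff equals sSup of y
  have hpayoff : D.payoff p = sSup (Set.range y) := by
    unfold Digraph'.payoff
    rw [show (fun v => (∑ u ∈ D.outN v, p u) - ∑ u ∈ D.inN v, p u) = y from
      funext fun v => hrow p v]
  have hbdd : BddAbove (Set.range y) := (Set.finite_range y).bddAbove
  have hmem : ∀ v, y v ≤ D.payoff p := by
    intro v
    rw [hpayoff]
    exact le_csSup hbdd ⟨v, rfl⟩
  have hpay0 : 0 ≤ D.payoff p := by
    have : (0:ℝ) = (∑ v, y v) / k := by rw [hsum0 p]; simp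
    rw [this]
    rw [div_le_iff₀ hk0] at *
    calc ∑ v, y v ≤ ∑ _v : V, D.payoff p := Finset.sum_le_sum fun v _ => hmem v
      _ = D.payoff p * k := by simp [Finset.sum_const, Finset.card_univ, mul_comm, hkdef]
  -- |y v| ≤ k * payoff
  have habs : ∀ v, |y v| ≤ k * D.payoff p := by
    intro v
    rcases le_or_gt 0 (y v) with h | h
    · rw [abs_of_nonneg h]
      calc y v ≤ D.payoff p := hmem v
        _ = 1 * D.payoff p := (one_mul _).symm
        _ ≤ k * D.payoff p := by
            apply mul_le_mul_of_nonneg_right _ hpay0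
            exact_mod_cast Fintype.card_pos
    · rw [abs_of_neg h]
      have hsplit : y v + ∑ u ∈ univ.erase v, y u = 0 := by
        rw [Finset.add_sum_erase univ y (mem_univ v)]
        exact hsum0 p
      have : -y v = ∑ u ∈ univ.erase v, y u := by linarith
      rw [this]
      calc ∑ u ∈ univ.erase v, y u ≤ ∑ _u ∈ univ.erase v, D.payoff p :=
            Finset.sum_le_sum fun u _ => hmem u
        _ = (univ.erase v).card * D.payoff p := by rw [Finset.sum_const, nsmul_eq_mul]
        _ ≤ k * D.payoff p := by
            apply mul_le_mul_of_nonneg_right _ hpay0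
            have : (univ.erase v).card ≤ k := by
              simpa [hkdef] using Finset.card_erase_le (s := (univ : Finset V)) (a := v)
            exact_mod_cast this
  have hynorm : ‖y‖ ≤ k * D.payoff p := by
    apply pi_norm_le_iff_of_nonneg (by positivity) |>.mpr
    intro v
    exact habs v
  -- q = p - const ∈ U
  set q : V → ℝ := p - (fun _ => 1 / (k:ℝ)) with hqdef
  have hqU : q ∈ U := by
    simp only [hU, LinearMap.mem_ker]
    show ∑ u, q u = 0
    simp only [hqdef, Pi.sub_apply]
    rw [Finset.sum_sub_distrib, hp1, Finset.sum_const, Finset.card_univ, nsmul_eq_mul]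
    field_simp
    simp [hkdef]
  have hAq : A.mulVec q = y := by
    rw [hqdef, Matrix.mulVec_sub, hconst, sub_zero, hy]
  have hqnorm : ‖q‖ ≤ K * ‖y‖ := by
    have := hKanti.le_mul_dist ⟨q, hqU⟩ 0
    simp only [map_zero, dist_zero_right] at this
    calc ‖q‖ = ‖(⟨q, hqU⟩ : U)‖ := rfl
      _ ≤ K * ‖L ⟨q, hqU⟩‖ := this
      _ = K * ‖y‖ := by rw [show L ⟨q, hqU⟩ = A.mulVec q from rfl, hAq]
  -- sSup of |p v - 1/k| ≤ ‖q‖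
  have hsup : sSup (Set.range fun v => |p v - 1 / (Fintype.card V : ℝ)|) ≤ ‖q‖ := by
    apply csSup_le (Set.range_nonempty _)
    rintro x ⟨v, rfl⟩
    have := norm_le_pi_norm q v
    simpa [hqdef, Real.norm_eq_abs, hkdef] using this
  -- conclude
  rw [div_mul_eq_mul_div, one_mul, div_le_iff₀ (by positivity)]
  calc sSup (Set.range fun v => |p v - 1 / (Fintype.card V : ℝ)|)
      ≤ ‖q‖ := hsup
    _ ≤ K * ‖y‖ := hqnorm
    _ ≤ K * (k * D.payoff p) := by
        apply mul_le_mul_of_nonneg_left hynorm (by positivity)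
    _ = D.payoff p * ((K:ℝ) * k) := by ring
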